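/- In the group algebra kQ_{4t} over a field of characteristic 2, with a = g+1, b = h+1, c = hg+1 and N the norm element, one has N = c a^{2t-2} b = c a^{2t-1} and N = a^{2t-1} + a^{2t-2}b + c a^{2t-2}. -/

import Mathlib

open MonoidAlgebra QuaternionGroup

section Aux

lemma geom_char2 {R : Type*} [Ring R] [CharP R 2] (x : R) (n : ℕ) :
    (x + 1) ^ (2 ^ n - 1) = ∑ i ∈ Finset.range (2 ^ n), x ^ i := by
  induction n with
  | zero => simp
  | succ n ih =>
    have h1 : (1:ℕ) ≤ 2 ^ n := Nat.one_le_two_pow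
    have e : 2 ^ (n+1) - 1 = (2 ^ n - 1) + 2 ^ n := by rw [pow_succ]; omega
    have e2 : 2 ^ (n+1) = 2 ^ n + 2 ^ n := by rw [pow_succ]; omega
    have hx : (x + 1) ^ (2 ^ n) = x ^ (2 ^ n) + 1 := by
      have := add_pow_char_pow_of_commute 2 n (Commute.one_right x)
      simpa using this
    rw [e, pow_add, ih, hx, e2, Finset.sum_range_add, mul_add, mul_one, Finset.sum_mul]
    rw [add_comm]
    congr 1
    refine Finset.sum_congr rfl fun i _ => ?_
    rw [← pow_add, add_comm]

lemma sum_range_zmod {M : Type*} [AddCommMonoid M] (n : ℕ) [NeZero n] (f : ZMod n → M) :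
    ∑ i ∈ Finset.range n, f (i : ZMod n) = ∑ x : ZMod n, f x := by
  refine Finset.sum_nbij' (fun i => (i : ZMod n)) (fun x => x.val) ?_ ?_ ?_ ?_ ?_
  · intro i hi; exact Finset.mem_univ _
  · intro x _; exact Finset.mem_range.mpr (ZMod.val_lt x)
  · intro i hi; exact ZMod.val_cast_of_lt (Finset.mem_range.mp hi)
  · intro x _; simp [ZMod.natCast_val, ZMod.cast_id]
  · intro i hi; rfl

lemma quaternion_sum {M : Type*} [AddCommMonoid M] (t : ℕ) [NeZero t]
    (f : QuaternionGroup t → M) :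
    ∑ j : QuaternionGroup t, f j =
      (∑ i : ZMod (2*t), f (QuaternionGroup.a i)) +
        ∑ i : ZMod (2*t), f (QuaternionGroup.xa i) := by
  classical
  let e : ZMod (2*t) ⊕ ZMod (2*t) ≃ QuaternionGroup t :=
    { toFun := fun x => match x with
        | .inl j => .a j
        | .inr j => .xa j
      invFun := fun x => match x with
        | .a j => .inl j
        | .xa j => .inr j
      left_inv := by rintro (x|x) <;> rfl
      right_inv := by rintro (x|x) <;> rfl }
  rw [← e.sum_comp f, Fintype.sum_sum_type]
  rfl

lemma char2_eq_of_add_eq_zero {R : Type*} [Ring R] [CharP R 2] {u v : R}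
    (h : u + v = 0) : u = v :=
  (CharTwo.add_eq_iff_eq_add.mp h).trans (zero_add v)

variable (k : Type*) [Field k] (t : ℕ)

/-- auxiliary: the image of `a i` in the group algebra. -/
noncomputable def bb (i : ZMod (2*t)) : MonoidAlgebra k (QuaternionGroup t) :=
  MonoidAlgebra.of k (QuaternionGroup t) (QuaternionGroup.a i)

/-- auxiliary: the image of `xa i` in the group algebra. -/
noncomputable def xx (i : ZMod (2*t)) : MonoidAlgebra k (QuaternionGroup t) :=
  MonoidAlgebra.of k (QuaternionGroup t) (QuaternionGroup.xa i)

lemma bb_mul_bb (i j : ZMod (2*t)) : bb k t i * bb k t j = bb k t (i + j) := by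
  simp [bb, ← map_mul, QuaternionGroup.a_mul_a]

lemma bb_mul_xx (i j : ZMod (2*t)) : bb k t i * xx k t j = xx k t (j - i) := by
  simp [bb, xx, ← map_mul, QuaternionGroup.a_mul_xa]

lemma xx_mul_bb (i j : ZMod (2*t)) : xx k t i * bb k t j = xx k t (i + j) := by
  simp [bb, xx, ← map_mul, QuaternionGroup.xa_mul_a]

lemma xx_mul_xx (i j : ZMod (2*t)) :
    xx k t i * xx k t j = bb k t ((t : ZMod (2*t)) + j - i) := by
  simp [bb, xx, ← map_mul, QuaternionGroup.xa_mul_xa]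

lemma bb_zero : bb k t 0 = 1 := by
  rw [bb, show (QuaternionGroup.a 0 : QuaternionGroup t) = 1 from rfl, map_one]

lemma bb_one_pow (n : ℕ) : (bb k t 1)^n = bb k t (n : ZMod (2*t)) := by
  rw [bb, bb, ← map_pow, QuaternionGroup.a_one_pow]

lemma bb_neg_one_pow (n : ℕ) : (bb k t (-1))^n = bb k t (-(n : ZMod (2*t))) := by
  induction n with
  | zero => simp [bb_zero]
  | succ n ih =>
    rw [pow_succ, ih, bb_mul_bb]
    congr 1
    push_cast
    ring

end Aux
/-- `N = c a^{2t-2} b = c a^{2t-1}` and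
`N = a^{2t-1} + a^{2t-2} b + c a^{2t-2}` in `k Q_{4t}`. -/
theorem stmt_4 (k : Type*) [Field k] [CharP k 2] (t : ℕ) (ht : 2 ≤ t)
    (hpow : ∃ m : ℕ, t = 2 ^ m) [NeZero t]
    (g h : MonoidAlgebra k (QuaternionGroup t))
    (hg : g = of k (QuaternionGroup t) (QuaternionGroup.a 1))
    (hh : h = of k (QuaternionGroup t) (QuaternionGroup.xa 0))
    (a b c N : MonoidAlgebra k (QuaternionGroup t))
    (ha : a = g + 1) (hb : b = h + 1) (hc : c = h * g + 1)
    (hN : N = ∑ j : QuaternionGroup t, of k (QuaternionGroup t) j) :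
    N = c * a ^ (2 * t - 2) * b ∧ N = c * a ^ (2 * t - 1) ∧
      N = a ^ (2 * t - 1) + a ^ (2 * t - 2) * b + c * a ^ (2 * t - 2) := by
  classical
  obtain ⟨m, htm⟩ := hpow
  have hm1 : 1 ≤ m := by
    rcases m with _ | m
    · norm_num at htm; omega
    · omega
  obtain ⟨s, hst⟩ : 2 ∣ t := htm ▸ dvd_pow_self 2 (by omega)
  have hs1 : 1 ≤ s := by omega
  haveI : NeZero (2*t) := ⟨by omega⟩
  haveI : Fact (Nat.Prime 2) := ⟨Nat.prime_two⟩
  haveI charM : CharP (MonoidAlgebra k (QuaternionGroup t)) 2 :=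
    charP_of_injective_algebraMap' k 2
  have hg' : g = bb k t 1 := hg
  have hh' : h = xx k t 0 := hh
  have h2t : 2*t = 2^(m+1) := by rw [htm, pow_succ]; ring
  -- the full sum of powers of g
  have hS : a ^ (2*t - 1) = ∑ x : ZMod (2*t), bb k t x := by
    rw [ha, hg']
    calc (bb k t 1 + 1) ^ (2*t-1) = (bb k t 1 + 1)^(2^(m+1) - 1) := by congr 1; omega
    _ = ∑ i ∈ Finset.range (2^(m+1)), (bb k t 1)^i := geom_char2 _ _
    _ = ∑ i ∈ Finset.range (2*t), bb k t (i : ZMod (2*t)) := by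
          rw [← h2t]; exact Finset.sum_congr rfl fun i _ => bb_one_pow k t i
    _ = ∑ x : ZMod (2*t), bb k t x := sum_range_zmod _ _
  have hshiftL : ∀ d : ZMod (2*t),
      bb k t d * (∑ x : ZMod (2*t), bb k t x) = ∑ x : ZMod (2*t), bb k t x := by
    intro d
    rw [Finset.mul_sum]
    simp only [bb_mul_bb]
    exact Fintype.sum_equiv (Equiv.addLeft d) _ _ (fun i => rfl)
  have hshiftR : ∀ d : ZMod (2*t),
      (∑ x : ZMod (2*t), bb k t x) * bb k t d = ∑ x : ZMod (2*t), bb k t x := by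
    intro d
    rw [Finset.sum_mul]
    simp only [bb_mul_bb]
    exact Fintype.sum_equiv (Equiv.addRight d) _ _ (fun i => rfl)
  have haS : (∑ x : ZMod (2*t), bb k t x) * a = 0 := by
    rw [ha, hg', mul_add, mul_one, hshiftR 1, CharTwo.add_self_eq_zero]
  have hpow0 : a ^ (2*t) = 0 := by
    have e : a^(2*t) = a^(2*t-1) * a := by rw [← pow_succ]; congr 1; omega
    rw [e, hS, haS]
  have ha2 : a * a = bb k t 2 + 1 := by
    rw [ha, hg']
    calc (bb k t 1 + 1) * (bb k t 1 + 1)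
        = bb k t 1 * bb k t 1 + (bb k t 1 + bb k t 1) + 1 := by noncomm_ring
    _ = bb k t 2 + 1 := by
        rw [CharTwo.add_self_eq_zero, add_zero, bb_mul_bb, one_add_one_eq_two]
  have hP2 : bb k t 2 * a^(2*t-2) = a^(2*t-2) := by
    apply char2_eq_of_add_eq_zero
    have e : a * a * a^(2*t-2) = 0 := by
      rw [← sq, ← pow_add, show 2 + (2*t-2) = 2*t by omega, hpow0]
    rw [ha2, add_mul, one_mul] at e
    exact e
  have hPev : ∀ j : ℕ, (bb k t 2)^j * a^(2*t-2) = a^(2*t-2) := by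
    intro j; induction j with
    | zero => simp
    | succ j ihj => rw [pow_succ, mul_assoc, hP2, ihj]
  have hcomm1 : Commute (bb k t 1) a := by
    rw [ha, hg']; exact (Commute.refl _).add_right (Commute.one_right _)
  have hbtP : bb k t ((t : ZMod (2*t)) - 1) * a^(2*t-2) = bb k t 1 * a^(2*t-2) := by
    have hcast : ((t - 1 : ℕ) : ZMod (2*t)) = (t : ZMod (2*t)) - 1 := by
      rw [Nat.cast_sub (by omega : 1 ≤ t), Nat.cast_one]
    have hts : t - 1 = 2*(s-1) + 1 := by omega
    have h2 : (bb k t 1)^2 = bb k t 2 := by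
      rw [sq, bb_mul_bb, one_add_one_eq_two]
    have hcq : bb k t 1 * a^(2*t-2) = a^(2*t-2) * bb k t 1 :=
      (hcomm1.pow_right (2*t-2)).eq
    rw [← hcast, ← bb_one_pow, hts, pow_succ, pow_mul, h2, mul_assoc, hcq,
      ← mul_assoc, hPev (s-1)]
  -- commutation with h
  have hah : a * h = h * (bb k t (-1) + 1) := by
    rw [ha, hg', hh', add_mul, one_mul, mul_add, mul_one, bb_mul_xx, xx_mul_bb]
    norm_num
  have hanh : ∀ n : ℕ, a^n * h = h * (bb k t (-1) + 1)^n := by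
    intro n; induction n with
    | zero => simp
    | succ n ihn =>
      rw [pow_succ', mul_assoc, ihn, ← mul_assoc, hah, mul_assoc, ← pow_succ']
  have hcm1 : Commute (bb k t (-1)) (bb k t 1) := by
    show bb k t (-1) * bb k t 1 = bb k t 1 * bb k t (-1)
    rw [bb_mul_bb, bb_mul_bb, add_comm]
  have hcm : Commute (bb k t (-1)) a := by
    rw [ha, hg']; exact hcm1.add_right (Commute.one_right _)
  have hc0 : ∀ n : ℕ, (bb k t (-1) + 1)^n = bb k t (-(n : ZMod (2*t))) * a^n := by
    intro n
    have e : bb k t (-1) * a = bb k t (-1) + 1 := by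
      rw [ha, hg', mul_add, mul_one, bb_mul_bb, neg_add_cancel, bb_zero, add_comm]
    rw [← e, hcm.mul_pow, bb_neg_one_pow]
  have hPh : a^(2*t-2) * h = h * a^(2*t-2) := by
    have e2 : -(((2*t-2 : ℕ)) : ZMod (2*t)) = 2 := by
      rw [Nat.cast_sub (by omega : 2 ≤ 2*t), ZMod.natCast_self, zero_sub, neg_neg]
      norm_num
    rw [hanh, hc0, e2, hP2]
  have hSh : a^(2*t-1) * h = h * a^(2*t-1) := by
    have e2 : -(((2*t-1 : ℕ)) : ZMod (2*t)) = 1 := by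
      rw [Nat.cast_sub (by omega : 1 ≤ 2*t), ZMod.natCast_self, zero_sub, neg_neg]
      norm_num
    rw [hanh, hc0, e2, hS, hshiftL 1]
  have hxS : h * (∑ x : ZMod (2*t), bb k t x) = ∑ x : ZMod (2*t), xx k t x := by
    rw [hh', Finset.mul_sum]
    simp only [xx_mul_bb, zero_add]
  have hNs : N = a^(2*t-1) + h * a^(2*t-1) := by
    have e1 : ∑ i : ZMod (2*t), of k (QuaternionGroup t) (QuaternionGroup.a i)
        = ∑ x : ZMod (2*t), bb k t x := rfl
    have e2 : ∑ i : ZMod (2*t), of k (QuaternionGroup t) (QuaternionGroup.xa i)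
        = ∑ x : ZMod (2*t), xx k t x := rfl
    rw [hN, quaternion_sum, e1, e2, ← hxS, hS]
  have hgS : g * (∑ x : ZMod (2*t), bb k t x) = ∑ x : ZMod (2*t), bb k t x := by
    rw [hg']; exact hshiftL 1
  have haP : bb k t 1 * a^(2*t-2) + a^(2*t-2) = a^(2*t-1) := by
    have e : a^(2*t-1) = a * a^(2*t-2) := by rw [← pow_succ']; congr 1; omega
    rw [e, ha, hg', add_mul, one_mul]
  have hhg : h * g = xx k t 1 := by
    rw [hh', hg', xx_mul_bb, zero_add]
  have hghh : xx k t 1 * h = bb k t ((t : ZMod (2*t)) - 1) := by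
    rw [hh', xx_mul_xx, add_zero]
  refine ⟨?_, ?_, ?_⟩
  · -- N = c * a^(2t-2) * b
    have hPb : a^(2*t-2) * b = b * a^(2*t-2) := by
      rw [hb, mul_add, add_mul, mul_one, one_mul, hPh]
    have hcb : c * b = bb k t ((t : ZMod (2*t)) - 1) + xx k t 1 + h + 1 := by
      rw [hc, hb, add_mul, one_mul, mul_add, mul_one, hhg, hghh]
      abel
    rw [mul_assoc, hPb, ← mul_assoc, hcb, add_mul, add_mul, add_mul, one_mul, hbtP]
    have exx : xx k t 1 * a^(2*t-2) = h * (bb k t 1 * a^(2*t-2)) := by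
      rw [← hhg, mul_assoc, hg']
    rw [exx, hNs, ← haP, mul_add]
    abel_nf
  · -- N = c * a^(2t-1)
    rw [hNs, hc, add_mul, one_mul, mul_assoc, hS, hgS]
    abel
  · -- N = a^(2t-1) + a^(2t-2)*b + c*a^(2t-2)
    have hPb2 : a^(2*t-2) * b = h * a^(2*t-2) + a^(2*t-2) := by
      rw [hb, mul_add, mul_one, hPh]
    have hcP : c * a^(2*t-2) = h * (bb k t 1 * a^(2*t-2)) + a^(2*t-2) := by
      rw [hc, add_mul, one_mul, mul_assoc, hg']
    rw [hNs, hPb2, hcP, ← haP, mul_add]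
    have hvv := CharTwo.add_self_eq_zero (a^(2*t-2))
    have key : bb k t 1 * a^(2*t-2) + a^(2*t-2) + (h * a^(2*t-2) + a^(2*t-2))
        + (h * (bb k t 1 * a^(2*t-2)) + a^(2*t-2))
        = bb k t 1 * a^(2*t-2) + a^(2*t-2)
          + (h * (bb k t 1 * a^(2*t-2)) + h * a^(2*t-2))
          + (a^(2*t-2) + a^(2*t-2)) := by abel
    rw [key, hvv, add_zero]
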